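/- If a maximal arc of degree k exists in a projective plane of order q with 1 < k < q, then k divides q. -/

import Mathlib

/-- A finite projective plane of order `q`. -/
structure ProjPlane (P L : Type*) where
  finP : Finite P
  finL : Finite L
  incid : P → L → Prop
  q : ℕ
  join : ∀ p₁ p₂ : P, p₁ ≠ p₂ → ∃! l : L, incid p₁ l ∧ incid p₂ l
  meet : ∀ l₁ l₂ : L, l₁ ≠ l₂ → ∃! p : P, incid p l₁ ∧ incid p l₂
  point_deg : ∀ p : P, {l : L | incid p l}.ncard = q + 1
  line_deg : ∀ l : L, {p : P | incid p l}.ncard = q + 1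

/-- The point set of a line. -/
def ProjPlane.lineSet {P L : Type*} (Pl : ProjPlane P L) (l : L) : Set P :=
  {p : P | Pl.incid p l}

/-- A maximal arc of degree `k`: a nonempty set of points meeting every line
in exactly `k` or exactly `0` points. -/
def IsMaxArc {P L : Type*} (Pl : ProjPlane P L) (A : Set P) (k : ℕ) : Prop :=
  A.Nonempty ∧ ∀ l : L, (Pl.lineSet l ∩ A).ncard = k ∨ (Pl.lineSet l ∩ A).ncard = 0

/-- If a maximal arc of degree k (a nonempty proper set of points meeting
every line in exactly k or 0 points) exists in a projective plane of order q
with 1 < k < q, then k divides q. -/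
theorem maxArc_degree_dvd_order {P L : Type*} (Pl : ProjPlane P L) (A : Set P)
    (k : ℕ) (hk1 : 1 < k) (hkq : k < Pl.q)
    (hA : IsMaxArc Pl A k) (hproper : A ≠ Set.univ) :
    k ∣ Pl.q := by
  classical
  haveI := Pl.finP
  haveI := Pl.finL
  haveI : Fintype P := Fintype.ofFinite P
  haveI : Fintype L := Fintype.ofFinite L
  obtain ⟨hne, hlines⟩ := hA
  -- For any point p, the lines through p partition A \ {p}.
  have key : ∀ p : P, (A \ {p}).ncard =
      ∑ l ∈ {l : L | Pl.incid p l}.toFinset, ((Pl.lineSet l ∩ A) \ {p}).ncard := by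
    intro p
    have hcov : (A \ {p}).toFinset =
        ({l : L | Pl.incid p l}.toFinset).biUnion
          (fun l => ((Pl.lineSet l ∩ A) \ {p}).toFinset) := by
      ext a
      simp only [Set.mem_toFinset, Set.mem_diff, Set.mem_singleton_iff,
        Finset.mem_biUnion, Set.mem_inter_iff, Set.mem_setOf_eq]
      constructor
      · rintro ⟨haA, hap⟩
        obtain ⟨l, ⟨hpl, hal⟩, -⟩ := Pl.join p a (Ne.symm hap)
        exact ⟨l, hpl, ⟨⟨hal, haA⟩, hap⟩⟩
      · rintro ⟨l, -, ⟨-, haA⟩, hap⟩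
        exact ⟨haA, hap⟩
    have hdisj : ∀ l₁ ∈ {l : L | Pl.incid p l}.toFinset,
        ∀ l₂ ∈ {l : L | Pl.incid p l}.toFinset, l₁ ≠ l₂ →
        Disjoint (((Pl.lineSet l₁ ∩ A) \ {p}).toFinset)
          (((Pl.lineSet l₂ ∩ A) \ {p}).toFinset) := by
      intro l₁ h₁ l₂ h₂ hne12
      simp only [Set.mem_toFinset, Set.mem_setOf_eq] at h₁ h₂
      rw [Finset.disjoint_left]
      intro a (ha1 : a ∈ ((Pl.lineSet l₁ ∩ A) \ {p}).toFinset)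
        (ha2 : a ∈ ((Pl.lineSet l₂ ∩ A) \ {p}).toFinset)
      rw [Set.mem_toFinset] at ha1 ha2
      simp only [Set.mem_toFinset, Set.mem_diff, Set.mem_inter_iff,
        Set.mem_singleton_iff, ProjPlane.lineSet, Set.mem_setOf_eq] at ha1 ha2
      obtain ⟨x, -, hx⟩ := Pl.meet l₁ l₂ hne12
      have h1 := hx a ⟨ha1.1.1, ha2.1.1⟩
      have h2 := hx p ⟨h₁, h₂⟩
      exact ha1.2 (h1.trans h2.symm)
    rw [Set.ncard_eq_toFinset_card', hcov, Finset.card_biUnion hdisj]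
    exact Finset.sum_congr rfl fun l _ => (Set.ncard_eq_toFinset_card' _).symm
  have hLp : ∀ p : P, ({l : L | Pl.incid p l}.toFinset).card = Pl.q + 1 := by
    intro p
    rw [← Set.ncard_eq_toFinset_card']
    exact Pl.point_deg p
  -- Count |A| using a point x ∈ A.
  obtain ⟨x, hx⟩ := hne
  obtain ⟨m, rfl⟩ : ∃ m, k = m + 1 := ⟨k - 1, by omega⟩
  have hxcount : (A \ {x}).ncard = (Pl.q + 1) * m := by
    rw [key x]
    rw [Finset.sum_congr rfl (fun l hl => ?_), Finset.sum_const, hLp x, smul_eq_mul]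
    simp only [Set.mem_toFinset, Set.mem_setOf_eq] at hl
    have hxmem : x ∈ Pl.lineSet l ∩ A := ⟨hl, hx⟩
    have hkl : (Pl.lineSet l ∩ A).ncard = m + 1 := by
      rcases hlines l with h | h
      · exact h
      · exfalso
        rw [Set.ncard_eq_zero (Set.toFinite _)] at h
        exact Set.nonempty_iff_ne_empty.mp ⟨x, hxmem⟩ h
    rw [Set.ncard_diff_singleton_of_mem hxmem, hkl]
    omega
  have hApos : 1 ≤ A.ncard := by
    have h0 : A.ncard ≠ 0 := fun h0 =>
      Set.nonempty_iff_ne_empty.mp ⟨x, hx⟩ ((Set.ncard_eq_zero (Set.toFinite _)).mp h0)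
    omega
  have hxd : (A \ {x}).ncard = A.ncard - 1 :=
    Set.ncard_diff_singleton_of_mem hx
  have hAcard : A.ncard = (Pl.q + 1) * m + 1 := by omega
  -- A point y ∉ A shows (m+1) ∣ |A|.
  obtain ⟨y, hy⟩ : ∃ y, y ∉ A := by
    by_contra h
    push_neg at h
    exact hproper (Set.eq_univ_of_forall h)
  have hdvdA : m + 1 ∣ A.ncard := by
    have hAy : A \ {y} = A := by
      ext a; simp only [Set.mem_diff, Set.mem_singleton_iff]
      exact ⟨fun h => h.1, fun h => ⟨h, fun e => hy (e ▸ h)⟩⟩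
    have := key y
    rw [hAy] at this
    rw [this]
    refine Finset.dvd_sum fun l _ => ?_
    have hyni : y ∉ Pl.lineSet l ∩ A := fun h => hy h.2
    rw [Set.diff_singleton_eq_self hyni]
    rcases hlines l with h | h
    · rw [h]
    · rw [h]; exact dvd_zero _
  -- Conclude: (m+1) ∣ q.
  have hmul : (m + 1) * (Pl.q + 1) = A.ncard + Pl.q := by
    rw [hAcard]; ring
  have hd1 : m + 1 ∣ (m + 1) * (Pl.q + 1) := dvd_mul_right _ _
  have hd2 := Nat.dvd_sub hd1 hdvdA
  have hsub : (m + 1) * (Pl.q + 1) - A.ncard = Pl.q := by omega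
  rwa [hsub] at hd2
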